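/- Under the fugacity-z self-avoiding walk measure on K_n, the random variable n − 1 − L_n has the distribution of a Poisson random variable of rate ν = n/z conditioned to be less than n; equivalently, for all integers 0 ≤ k ≤ n−1, P_{n,z}(L_n = n−1−k) = e^{-ν} ν^k / (k! · Q(n,ν)). -/

import Mathlib

open Filter Finset Real

/-- Number of `k`-step SAWs weight: `(z/n)^k` times the number of walks. -/
noncomputable def sawWeight (n : ℕ) (z : ℝ) (k : ℕ) : ℝ :=
  (z / n) ^ k * ((n - 1).descFactorial k)

/-- Partition function of the variable-length SAW model on `K_n`. -/
noncomputable def sawZ (n : ℕ) (z : ℝ) : ℝ := ∑ k ∈ Finset.range n, sawWeight n z k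

/-- Probability that the walk length equals `k`. -/
noncomputable def sawProb (n : ℕ) (z : ℝ) (k : ℕ) : ℝ := sawWeight n z k / sawZ n z

/-- Mean walk length. -/
noncomputable def sawMean (n : ℕ) (z : ℝ) : ℝ := ∑ k ∈ Finset.range n, (k : ℝ) * sawProb n z k

/-- Variance of the walk length. -/
noncomputable def sawVar (n : ℕ) (z : ℝ) : ℝ :=
  (∑ k ∈ Finset.range n, (k : ℝ) ^ 2 * sawProb n z k) - (sawMean n z) ^ 2

/-- Tail distribution `P(L_n > x)` for real `x`. -/
noncomputable def sawTail (n : ℕ) (z : ℝ) (x : ℝ) : ℝ :=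
  ∑ k ∈ Finset.range n, if x < (k : ℝ) then sawProb n z k else 0

/-- Regularised incomplete gamma function at integer first argument,
    `Q(n, ν) = e^{-ν} ∑_{j<n} ν^j/j!`. -/
noncomputable def Qreg (n : ℕ) (ν : ℝ) : ℝ :=
  Real.exp (-ν) * ∑ j ∈ Finset.range n, ν ^ j / (Nat.factorial j)

/-- `H_n(ν) = Γ(n) Q(n,ν) / (ν^n e^{-ν})`. -/
noncomputable def Hfun (n : ℕ) (ν : ℝ) : ℝ :=
  Real.Gamma n * Qreg n ν / (ν ^ n * Real.exp (-ν))

/-- Standard normal density. -/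
noncomputable def normpdf (x : ℝ) : ℝ := Real.exp (-x ^ 2 / 2) / Real.sqrt (2 * Real.pi)

/-- Standard normal tail distribution `Φ̄`. -/
noncomputable def normTail (x : ℝ) : ℝ := ∫ t in Set.Ioi x, normpdf t

/-- `η(λ) = sgn(λ-1) √(2(λ-1-log λ))`. -/
noncomputable def etaF (l : ℝ) : ℝ := Real.sign (l - 1) * Real.sqrt (2 * (l - 1 - Real.log l))

/-- `Γ*(n) = √(n/(2π)) e^n n^{-n} Γ(n)`. -/
noncomputable def gammaStar (n : ℕ) : ℝ :=
  Real.sqrt (n / (2 * Real.pi)) * Real.exp n * ((n : ℝ) ^ n)⁻¹ * Real.Gamma n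

/-- The operator `(ν d/dν)^l`. -/
noncomputable def thetaOp : ℕ → (ℝ → ℝ) → (ℝ → ℝ)
  | 0, f => f
  | (l + 1), f => fun ν => ν * deriv (thetaOp l f) ν

theorem saw_length_poisson (n : ℕ) (hn : 1 ≤ n) (z : ℝ) (hz : 0 < z)
    (k : ℕ) (hk : k ≤ n - 1) :
    sawProb n z (n - 1 - k)
      = Real.exp (-(n / z)) * (n / z) ^ k / ((Nat.factorial k) * Qreg n (n / z)) := by
  have hn' : (0:ℝ) < n := by exact_mod_cast Nat.pos_of_ne_zero (by omega)
  set a : ℝ := z / n with ha_def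
  have ha : 0 < a := div_pos hz hn'
  have hν : (n:ℝ) / z = a⁻¹ := by
    rw [ha_def, inv_div]
  set S : ℝ := ∑ j ∈ Finset.range n, a⁻¹ ^ j / (Nat.factorial j) with hS_def
  have hS : 0 < S := by
    apply Finset.sum_pos
    · intro j hj
      positivity
    · exact ⟨0, Finset.mem_range.mpr (by omega)⟩
  have hdf : ∀ j, j ≤ n - 1 →
      ((n - 1).descFactorial (n - 1 - j) : ℝ) * (Nat.factorial j) = (Nat.factorial (n-1)) := by
    intro j hj
    have h := Nat.factorial_mul_descFactorial (show n - 1 - j ≤ n - 1 by omega)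
    rw [show (n-1) - (n-1-j) = j by omega] at h
    exact_mod_cast by rw [mul_comm]; exact_mod_cast congrArg (Nat.cast (R := ℝ)) h
  have hterm : ∀ j, j ≤ n - 1 →
      sawWeight n z (n - 1 - j)
        = a ^ (n-1) * (Nat.factorial (n-1)) * (a⁻¹ ^ j / (Nat.factorial j)) := by
    intro j hj
    rw [sawWeight, ← ha_def]
    have hpow : a ^ (n-1) = a ^ (n-1-j) * a ^ j := by
      rw [← pow_add]; congr 1; omega
    have hj' := hdf j hj
    have hfj : (Nat.factorial j : ℝ) ≠ 0 := by exact_mod_cast Nat.factorial_ne_zero j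
    rw [hpow]
    field_simp
    rw [← hj']
    have ha0 : a ≠ 0 := ne_of_gt ha
    field_simp
    rw [← mul_pow, mul_one_div_cancel ha0, one_pow]
  have hZ : sawZ n z = a ^ (n-1) * (Nat.factorial (n-1)) * S := by
    rw [sawZ, ← Finset.sum_range_reflect, hS_def, Finset.mul_sum]
    refine Finset.sum_congr rfl fun j hj => ?_
    exact hterm j (by have := Finset.mem_range.mp hj; omega)
  have hnum := hterm k hk
  rw [sawProb, hZ, hnum, hν, Qreg, ← hS_def]
  have hfk : (Nat.factorial k : ℝ) ≠ 0 := by exact_mod_cast Nat.factorial_ne_zero k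
  have hfn : (Nat.factorial (n-1) : ℝ) ≠ 0 := by exact_mod_cast Nat.factorial_ne_zero (n-1)
  have hexp : Real.exp (-a⁻¹) ≠ 0 := Real.exp_ne_zero _
  have hap : a ^ (n-1) ≠ 0 := pow_ne_zero _ (ne_of_gt ha)
  field_simp
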